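/- Let R be a polynomial ring K[x1,...,xp,y1,...,yq,z1,...,zs] over a field. Then the ideal quotient [(x_p, x_1⋯x_{p-1}, y_1⋯y_q·g) : (x_p, x_1⋯x_{p-1}, y_1⋯y_q)] equals (x_p, x_1⋯x_{p-1}, g), for any g ∈ R. -/

import Mathlib

open MvPolynomial

/-- An auxiliary index re-shuffle putting the `y`-variables first. -/
def stmt1ReIdx (p q s : ℕ) : (Fin p ⊕ Fin q ⊕ Fin s) ≃ (Fin q ⊕ (Fin p ⊕ Fin s)) where
  toFun := Sum.elim (fun i => .inr (.inl i)) (Sum.elim .inl (fun k => .inr (.inr k)))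
  invFun := Sum.elim (fun j => .inr (.inl j)) (Sum.elim (fun i => .inl i) (fun k => .inr (.inr k)))
  left_inv := by rintro (i | j | k) <;> rfl
  right_inv := by rintro (j | i | k) <;> rfl

lemma stmt1_keyX {A : Type*} [CommRing A] {σ : Type*} (J : Ideal A) (a : σ)
    (f : MvPolynomial σ A) (h : X a * f ∈ J.map (C : A →+* MvPolynomial σ A)) :
    f ∈ J.map (C : A →+* MvPolynomial σ A) := by
  rw [mem_map_C_iff] at h ⊢
  intro m
  have := h (Finsupp.single a 1 + m)
  rwa [coeff_X_mul] at this

lemma stmt1_keyProd {A : Type*} [CommRing A] {σ : Type*} (J : Ideal A) (t : Finset σ) :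
    ∀ f : MvPolynomial σ A, (∏ j ∈ t, X j) * f ∈ J.map (C : A →+* MvPolynomial σ A) →
      f ∈ J.map (C : A →+* MvPolynomial σ A) := by
  classical
  induction t using Finset.induction_on with
  | empty => simp
  | @insert a t ha ih =>
    intro f h
    rw [Finset.prod_insert ha, mul_assoc] at h
    exact ih f (stmt1_keyX J a ((∏ j ∈ t, X j) * f) h)

/-- In `R = K[x₁,…,x_p, y₁,…,y_q, z₁,…,z_s]`, the ideal quotient
`[(x_p, x₁⋯x_{p-1}, y₁⋯y_q·g) : (x_p, x₁⋯x_{p-1}, y₁⋯y_q)] = (x_p, x₁⋯x_{p-1}, g)`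
for any `g`. -/
theorem stmt_1 (K : Type*) [Field K] (p q s : ℕ) (hp : 1 ≤ p) (hq : 1 ≤ q)
    (g : MvPolynomial (Fin p ⊕ Fin q ⊕ Fin s) K) :
    let R := MvPolynomial (Fin p ⊕ Fin q ⊕ Fin s) K
    let x : Fin p → R := fun i => X (Sum.inl i)
    let y : Fin q → R := fun j => X (Sum.inr (Sum.inl j))
    let xp : R := x ⟨p - 1, by omega⟩
    let Px : R := ∏ i ∈ Finset.univ.filter (fun i : Fin p => (i : ℕ) < p - 1), x i
    let Py : R := ∏ j, y j
    (Ideal.span {xp, Px, Py * g}).colon (Ideal.span {xp, Px, Py}) =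
      Ideal.span {xp, Px, g} := by
  intro R x y xp Px Py
  classical
  set σe := stmt1ReIdx p q s with hσe
  set A := MvPolynomial (Fin p ⊕ Fin s) K with hA
  set T := MvPolynomial (Fin q) A with hT
  set φ : R ≃+* T :=
    ((renameEquiv K σe).trans (sumAlgEquiv K (Fin q) (Fin p ⊕ Fin s))).toRingEquiv with hφ
  set xp' : A := X (Sum.inl ⟨p - 1, by omega⟩) with hxp'
  set Px' : A := ∏ i ∈ Finset.univ.filter (fun i : Fin p => (i : ℕ) < p - 1),
    X (Sum.inl i) with hPx'
  have hφxp : φ xp = C xp' := by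
    show sumAlgEquiv K _ _ (rename σe (X (Sum.inl ⟨p - 1, by omega⟩))) = C xp'
    rw [rename_X]
    exact sumAlgEquiv_X_inr K (Fin q) (Fin p ⊕ Fin s) (Sum.inl ⟨p - 1, by omega⟩)
  have hφx : ∀ i : Fin p, φ (x i) = C (X (Sum.inl i) : A) := by
    intro i
    show sumAlgEquiv K _ _ (rename σe (X (Sum.inl i))) = _
    rw [rename_X]
    exact sumAlgEquiv_X_inr K (Fin q) (Fin p ⊕ Fin s) (Sum.inl i)
  have hφPx : φ Px = C Px' := by
    rw [hPx', map_prod, map_prod]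
    exact Finset.prod_congr rfl fun i _ => hφx i
  have hφPy : φ Py = ∏ j : Fin q, X j := by
    rw [map_prod]
    refine Finset.prod_congr rfl fun j _ => ?_
    show sumAlgEquiv K _ _ (rename σe (X (Sum.inr (Sum.inl j)))) = X j
    rw [rename_X]
    exact sumAlgEquiv_X_inl K (Fin q) (Fin p ⊕ Fin s) j
  have hImap : Ideal.map φ (Ideal.span {xp, Px}) = Ideal.span {(C xp' : T), C Px'} := by
    rw [Ideal.map_span, Set.image_insert_eq, Set.image_singleton, hφxp, hφPx]
  have hCmap : Ideal.span {(C xp' : T), C Px'} =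
      Ideal.map (C : A →+* T) (Ideal.span {xp', Px'}) := by
    rw [Ideal.map_span, Set.image_insert_eq, Set.image_singleton]
  -- the key cancellation lemma: `Py` is a nonzerodivisor mod `(xp, Px)`
  have L : ∀ f : R, Py * f ∈ Ideal.span {xp, Px} → f ∈ Ideal.span {xp, Px} := by
    intro f hf
    have h1 : φ (Py * f) ∈ Ideal.map φ (Ideal.span {xp, Px}) := Ideal.mem_map_of_mem _ hf
    rw [map_mul, hφPy, hImap, hCmap] at h1
    have h2 := stmt1_keyProd (Ideal.span {xp', Px'}) Finset.univ (φ f) h1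
    rw [← hCmap, ← hImap] at h2
    exact Ideal.apply_mem_of_equiv_iff.mp h2
  apply le_antisymm
  · intro h hh
    have hPyh : h * Py ∈ Ideal.span {xp, Px, Py * g} := by
      have := Submodule.mem_colon.mp hh Py (Ideal.subset_span (by simp))
      simpa [smul_eq_mul] using this
    rw [Ideal.mem_span_insert] at hPyh
    obtain ⟨a, z, hz, hrep⟩ := hPyh
    rw [Ideal.mem_span_insert] at hz
    obtain ⟨b, w, hw, hzrep⟩ := hz
    rw [Ideal.mem_span_singleton] at hw
    obtain ⟨c, rfl⟩ := hw
    subst hzrep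
    have hsub : Py * (h - c * g) ∈ Ideal.span {xp, Px} := by
      have heq : Py * (h - c * g) = a * xp + b * Px := by
        linear_combination hrep
      rw [heq]
      exact Ideal.add_mem _
        (Ideal.mul_mem_left _ a (Ideal.subset_span (by simp)))
        (Ideal.mul_mem_left _ b (Ideal.subset_span (by simp)))
    have hL := L _ hsub
    have hmono : Ideal.span {xp, Px} ≤ Ideal.span {xp, Px, g} := by
      apply Ideal.span_mono
      intro r hr
      rcases hr with rfl | rfl <;> simp
    have : h - c * g + c * g ∈ Ideal.span {xp, Px, g} :=
      Ideal.add_mem _ (hmono hL)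
        (Ideal.mul_mem_left _ c (Ideal.subset_span (by simp)))
    simpa using this
  · rw [Ideal.span_le]
    intro r hr
    rw [SetLike.mem_coe, Submodule.mem_colon]
    intro pp hpp
    rw [smul_eq_mul]
    have hxpI : xp ∈ Ideal.span {xp, Px, Py * g} := Ideal.subset_span (by simp)
    have hPxI : Px ∈ Ideal.span {xp, Px, Py * g} := Ideal.subset_span (by simp)
    have hPygI : Py * g ∈ Ideal.span {xp, Px, Py * g} := Ideal.subset_span (by simp)
    rcases hr with rfl | rfl | hg
    · exact Ideal.mul_mem_right pp _ hxpI
    · exact Ideal.mul_mem_right pp _ hPxI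
    · -- r = g
      rw [hg]
      induction hpp using Submodule.span_induction with
      | mem w hw =>
        rcases hw with rfl | rfl | rfl
        · exact Ideal.mul_mem_left _ g hxpI
        · exact Ideal.mul_mem_left _ g hPxI
        · rw [show g * Py = Py * g from mul_comm g Py]; exact hPygI
      | zero => simp
      | add u v _ _ hu hv => rw [mul_add]; exact Ideal.add_mem _ hu hv
      | smul a u _ hu =>
        rw [smul_eq_mul, mul_left_comm]
        exact Ideal.mul_mem_left _ a hu
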